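/- (Local frustration equals average frustration for twofold degeneracy) Let S, R be nonempty finite types. Let U_S, V_S be unitary matrices on ℂ^S and U_R, V_R unitary matrices on ℂ^R, and set U = U_S ⊗ U_R and V = V_S ⊗ V_R. Let Π be an orthogonal projection matrix on ℂ^S with U_S Π U_S^† = Π and V_S Π V_S^† = Π. Let ψ_+ ∈ ℂ^{S×R} be a unit vector with U ψ_+ = ψ_+, set ψ_- = V ψ_+, and assume U ψ_- = −ψ_-. Let μ = ½ |ψ_+⟩⟨ψ_+| + ½ |ψ_-⟩⟨ψ_-| be the maximally mixed ground state. Then for all a, b ∈ ℂ with |a|² + |b|² = 1 and ψ = a ψ_+ + b ψ_-, one has 1 − ⟨ψ, (Π ⊗ 1_R) ψ⟩ = 1 − tr((Π ⊗ 1_R) μ). -/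

import Mathlib

open Matrix
open scoped ComplexOrder Kronecker Classical

/-- Sum of the `d` largest eigenvalues (with multiplicity, decreasing order)
of a Hermitian matrix. -/
noncomputable def sumTopEigs {n : Type*} [Fintype n] [DecidableEq n]
    {A : Matrix n n ℂ} (hA : A.IsHermitian) (d : ℕ) : ℝ :=
  ((((Finset.univ.val.map hA.eigenvalues).sort (· ≤ ·)).reverse.take d)).sum

/-- `ε^(d)(A) = 1 - Σ_{i=1}^d λ_i^↓(A)` for Hermitian `A` (junk value `0` otherwise). -/
noncomputable def epsD {n : Type*} [Fintype n] [DecidableEq n]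
    (A : Matrix n n ℂ) (d : ℕ) : ℝ :=
  if h : A.IsHermitian then 1 - sumTopEigs h d else 0

/-- `|ψ⟩⟨ψ|`. -/
noncomputable def outer {n : Type*} (ψ : n → ℂ) : Matrix n n ℂ :=
  fun i j => ψ i * star (ψ j)

/-- Partial trace over the second tensor factor. -/
noncomputable def ptraceR {S R : Type*} [Fintype R] (M : Matrix (S × R) (S × R) ℂ) :
    Matrix S S ℂ :=
  fun s s' => ∑ r, M (s, r) (s', r)

/-- Partial trace over the third tensor factor. -/
noncomputable def ptrace3 {S R A : Type*} [Fintype A] (M : Matrix (S × R × A) (S × R × A) ℂ) :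
    Matrix (S × R) (S × R) ℂ :=
  fun p q => ∑ a, M (p.1, p.2, a) (q.1, q.2, a)

/-- Partial trace over the second (middle) tensor factor. -/
noncomputable def ptrace2 {S R A : Type*} [Fintype R] (M : Matrix (S × R × A) (S × R × A) ℂ) :
    Matrix (S × A) (S × A) ℂ :=
  fun p q => ∑ r, M (p.1, r, p.2) (q.1, r, q.2)

/-- Partial trace over the second and third tensor factors. -/
noncomputable def ptrace23 {S R A : Type*} [Fintype R] [Fintype A]
    (M : Matrix (S × R × A) (S × R × A) ℂ) : Matrix S S ℂ :=
  fun s s' => ∑ r, ∑ a, M (s, r, a) (s', r, a)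

/-- Convex-roof extension `E^(d)_{S|R}`: the infimum over all finite pure-state
convex decompositions `ρ = Σ_k p_k |ψ_k⟩⟨ψ_k|` of `Σ_k p_k ε^(d)(tr_R |ψ_k⟩⟨ψ_k|)`. -/
noncomputable def convRoofE {S R : Type*} [Fintype S] [Fintype R] [DecidableEq S]
    (d : ℕ) (ρ : Matrix (S × R) (S × R) ℂ) : ℝ :=
  sInf { e : ℝ | ∃ (m : ℕ) (p : Fin m → ℝ) (ψ : Fin m → (S × R → ℂ)),
    (∀ k, 0 ≤ p k) ∧ (∑ k, p k = 1) ∧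
    (∀ k, star (ψ k) ⬝ᵥ ψ k = 1) ∧
    (ρ = ∑ k, (p k : ℂ) • outer (ψ k)) ∧
    e = ∑ k, p k * epsD (ptraceR (outer (ψ k))) d }

/-- Classical correlations `C^(d)_{S|A}`:
`ε^(d)(tr_A ρ)` minus the infimum over all POVMs `{M_x}` on `A` of
`Σ_x p_x ε^(d)(p_x⁻¹ tr_A((1_S ⊗ M_x) ρ))`, where `p_x = tr((1_S ⊗ M_x) ρ)`
and terms with `p_x = 0` are omitted. -/
noncomputable def classC {S A : Type*} [Fintype S] [Fintype A] [DecidableEq S] [DecidableEq A]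
    (d : ℕ) (ρ : Matrix (S × A) (S × A) ℂ) : ℝ :=
  epsD (ptraceR ρ) d -
  sInf { e : ℝ | ∃ (m : ℕ) (M : Fin m → Matrix A A ℂ),
    (∀ x, (M x).PosSemidef) ∧ (∑ x, M x = 1) ∧
    e = ∑ x,
      (if (((1 : Matrix S S ℂ) ⊗ₖ M x) * ρ).trace = 0 then 0
       else ((((1 : Matrix S S ℂ) ⊗ₖ M x) * ρ).trace).re *
         epsD (((((1 : Matrix S S ℂ) ⊗ₖ M x) * ρ).trace)⁻¹ •
           ptraceR (((1 : Matrix S S ℂ) ⊗ₖ M x) * ρ)) d) }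

lemma kron_conjTranspose {S R : Type*} (A : Matrix S S ℂ) (B : Matrix R R ℂ) :
    (A ⊗ₖ B)ᴴ = Aᴴ ⊗ₖ Bᴴ := by
  ext ⟨i, j⟩ ⟨k, l⟩
  simp [Matrix.conjTranspose_apply, Matrix.kroneckerMap_apply]

lemma sesq {n : Type*} [Fintype n] (A B : Matrix n n ℂ) (x y : n → ℂ) :
    star x ⬝ᵥ ((Aᴴ * B) *ᵥ y) = star (A *ᵥ x) ⬝ᵥ (B *ᵥ y) := by
  rw [Matrix.star_mulVec, ← Matrix.mulVec_mulVec, Matrix.dotProduct_mulVec]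

lemma trace_mul_outer {n : Type*} [Fintype n] (M : Matrix n n ℂ) (φ : n → ℂ) :
    (M * outer φ).trace = star φ ⬝ᵥ (M *ᵥ φ) := by
  simp only [Matrix.trace, Matrix.diag, Matrix.mul_apply, outer, dotProduct,
    Matrix.mulVec, Pi.star_apply, Finset.mul_sum]
  congr 1; ext i; congr 1; ext j; ring

/-- Local frustration equals average frustration for twofold
degeneracy: in the setting of the parity lemma, with
`μ = ½|ψ₊⟩⟨ψ₊| + ½|ψ₋⟩⟨ψ₋|` the maximally mixed ground state, every normalized
`ψ = a ψ₊ + b ψ₋` satisfies `1 - ⟨ψ, (P ⊗ 1_R) ψ⟩ = 1 - tr((P ⊗ 1_R) μ)`. -/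
theorem stmt15 {S R : Type*} [Fintype S] [Fintype R] [DecidableEq S] [DecidableEq R]
    [Nonempty S] [Nonempty R]
    (US VS : Matrix S S ℂ) (UR VR : Matrix R R ℂ)
    (hUS : US ∈ Matrix.unitaryGroup S ℂ) (hVS : VS ∈ Matrix.unitaryGroup S ℂ)
    (hUR : UR ∈ Matrix.unitaryGroup R ℂ) (hVR : VR ∈ Matrix.unitaryGroup R ℂ)
    (P : Matrix S S ℂ) (hP : P.IsHermitian) (hP2 : P * P = P)
    (hUP : US * P * USᴴ = P) (hVP : VS * P * VSᴴ = P)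
    (ψp : S × R → ℂ) (hψp : star ψp ⬝ᵥ ψp = 1)
    (hU : (US ⊗ₖ UR) *ᵥ ψp = ψp)
    (ψm : S × R → ℂ) (hψm : ψm = (VS ⊗ₖ VR) *ᵥ ψp)
    (hUm : (US ⊗ₖ UR) *ᵥ ψm = -ψm)
    (μ : Matrix (S × R) (S × R) ℂ)
    (hμ : μ = (1 / 2 : ℂ) • outer ψp + (1 / 2 : ℂ) • outer ψm)
    (a b : ℂ) (hab : ‖a‖ ^ 2 + ‖b‖ ^ 2 = 1) :
    1 - star (a • ψp + b • ψm) ⬝ᵥ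
          ((P ⊗ₖ (1 : Matrix R R ℂ)) *ᵥ (a • ψp + b • ψm)) =
      1 - ((P ⊗ₖ (1 : Matrix R R ℂ)) * μ).trace := by
  set Q : Matrix (S × R) (S × R) ℂ := P ⊗ₖ (1 : Matrix R R ℂ) with hQdef
  set U : Matrix (S × R) (S × R) ℂ := US ⊗ₖ UR with hUdef
  set V : Matrix (S × R) (S × R) ℂ := VS ⊗ₖ VR with hVdef
  have hUSu : USᴴ * US = 1 := Matrix.UnitaryGroup.star_mul_self ⟨US, hUS⟩
  have hVSu : VSᴴ * VS = 1 := Matrix.UnitaryGroup.star_mul_self ⟨VS, hVS⟩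
  have hURu : URᴴ * UR = 1 := Matrix.UnitaryGroup.star_mul_self ⟨UR, hUR⟩
  have hVRu : VRᴴ * VR = 1 := Matrix.UnitaryGroup.star_mul_self ⟨VR, hVR⟩
  have hUct : Uᴴ = USᴴ ⊗ₖ URᴴ := kron_conjTranspose US UR
  have hVct : Vᴴ = VSᴴ ⊗ₖ VRᴴ := kron_conjTranspose VS VR
  -- USᴴ P US = P
  have hUP' : USᴴ * P * US = P := by
    calc USᴴ * P * US = USᴴ * (US * P * USᴴ) * US := by rw [hUP]
    _ = (USᴴ * US) * P * (USᴴ * US) := by noncomm_ring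
    _ = P := by rw [hUSu]; simp
  have hVP' : VSᴴ * P * VS = P := by
    calc VSᴴ * P * VS = VSᴴ * (VS * P * VSᴴ) * VS := by rw [hVP]
    _ = (VSᴴ * VS) * P * (VSᴴ * VS) := by noncomm_ring
    _ = P := by rw [hVSu]; simp
  have hQU : Uᴴ * (Q * U) = Q := by
    rw [hUct, hQdef, hUdef, ← Matrix.mul_kronecker_mul, ← Matrix.mul_kronecker_mul,
      Matrix.one_mul, ← Matrix.mul_assoc, hUP', hURu]
  have hQV : Vᴴ * (Q * V) = Q := by
    rw [hVct, hQdef, hVdef, ← Matrix.mul_kronecker_mul, ← Matrix.mul_kronecker_mul,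
      Matrix.one_mul, ← Matrix.mul_assoc, hVP', hVRu]
  -- cross terms vanish
  have cross : ∀ x y : S × R → ℂ, U *ᵥ x = x → U *ᵥ y = -y →
      star x ⬝ᵥ (Q *ᵥ y) = 0 := by
    intro x y hx hy
    have h : star x ⬝ᵥ (Q *ᵥ y) = - (star x ⬝ᵥ (Q *ᵥ y)) := by
      conv_lhs => rw [← hQU]
      rw [sesq, hx, ← Matrix.mulVec_mulVec, hy, Matrix.mulVec_neg, dotProduct_neg]
    linear_combination h / 2
  have hc1 : star ψp ⬝ᵥ (Q *ᵥ ψm) = 0 := cross ψp ψm hU hUm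
  have hc2 : star ψm ⬝ᵥ (Q *ᵥ ψp) = 0 := by
    have h : star ψm ⬝ᵥ (Q *ᵥ ψp) = - (star ψm ⬝ᵥ (Q *ᵥ ψp)) := by
      conv_lhs => rw [← hQU]
      rw [sesq, hUm, ← Matrix.mulVec_mulVec, hU, star_neg, neg_dotProduct]
    linear_combination h / 2
  -- ⟨ψm, Q ψm⟩ = ⟨ψp, Q ψp⟩
  have hmm : star ψm ⬝ᵥ (Q *ᵥ ψm) = star ψp ⬝ᵥ (Q *ᵥ ψp) := by
    rw [hψm]
    rw [Matrix.mulVec_mulVec, ← sesq, hQV]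
  -- trace
  have htr : ((Q : Matrix (S × R) (S × R) ℂ) * μ).trace = star ψp ⬝ᵥ (Q *ᵥ ψp) := by
    rw [hμ, Matrix.mul_add, Matrix.mul_smul, Matrix.mul_smul, Matrix.trace_add,
      Matrix.trace_smul, Matrix.trace_smul, trace_mul_outer, trace_mul_outer, hmm,
      smul_eq_mul]
    ring
  rw [htr]
  have hab' : (starRingEnd ℂ) a * a + (starRingEnd ℂ) b * b = 1 := by
    have h1 : (starRingEnd ℂ) a * a = ((‖a‖ ^ 2 : ℝ) : ℂ) := by
      rw [← Complex.normSq_eq_conj_mul_self, Complex.normSq_eq_norm_sq]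
    have h2 : (starRingEnd ℂ) b * b = ((‖b‖ ^ 2 : ℝ) : ℂ) := by
      rw [← Complex.normSq_eq_conj_mul_self, Complex.normSq_eq_norm_sq]
    rw [h1, h2, ← Complex.ofReal_add, hab, Complex.ofReal_one]
  congr 1
  simp only [star_add, star_smul, Matrix.mulVec_add, Matrix.mulVec_smul,
    add_dotProduct, dotProduct_add, smul_dotProduct, dotProduct_smul,
    smul_eq_mul, hc1, hc2, hmm, mul_zero, add_zero, zero_add]
  rw [← mul_assoc, ← mul_assoc]
  have : (star a * a + star b * b) * (star ψp ⬝ᵥ (Q *ᵥ ψp))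
      = star ψp ⬝ᵥ (Q *ᵥ ψp) := by
    rw [show (star a : ℂ) = (starRingEnd ℂ) a from rfl,
      show (star b : ℂ) = (starRingEnd ℂ) b from rfl, hab', one_mul]
  linear_combination this
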